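/- Let A be a complete normed ring with unit 1, R : ℝ → A Bochner measurable, β : ℝ → ℝ integrable on ℝ with ‖R(τ)‖ ≤ β(τ) a.e., Q(t,0) the Dyson series and Q₊ = lim_{t→+∞} Q(t,0) its norm limit. Then for every t ≥ 0, ‖Q₊ − Q(t,0)‖ ≤ exp(∫_ℝ β(τ) dτ) · ∫_t^∞ β(τ) dτ. -/

import Mathlib

open MeasureTheory intervalIntegral Filter Topology

/-- The `k`-fold time-ordered iterated Bochner integral
`∫_s^t R(t₁) (∫_s^{t₁} R(t₂) ( ⋯ (∫_s^{t_{k−1}} R(t_k) dt_k) ⋯ ) dt₂) dt₁`. -/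
noncomputable def timeOrderedIntegral {A : Type*} [NormedRing A] [NormedSpace ℝ A]
    (f : ℝ → A) (s : ℝ) : ℕ → ℝ → A
  | 0, _ => 1
  | k + 1, t => ∫ τ in s..t, f τ * timeOrderedIntegral f s k τ

/-- The Dyson series
`Q(t,s) = 1 + Σ_{k≥1} i^k ∫_s^t R(t₁) ∫_s^{t₁} R(t₂) ⋯ ∫_s^{t_{k−1}} R(t_k) dt_k ⋯ dt₁`. -/
noncomputable def dyson {A : Type*} [NormedRing A] [NormedAlgebra ℂ A]
    (R : ℝ → A) (s t : ℝ) : A :=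
  1 + ∑' k : ℕ, (Complex.I ^ (k + 1)) • timeOrderedIntegral R s (k + 1) t

namespace DysonAux

/-- The primitive `t ↦ ∫_0^t β`. -/
noncomputable def primInt (β : ℝ → ℝ) (t : ℝ) : ℝ := ∫ τ in (0:ℝ)..t, β τ

lemma swap_tri {β g : ℝ → ℝ} {t : ℝ} (ht : 0 ≤ t)
    (hβ : IntegrableOn β (Set.Ioc 0 t)) (hg : IntegrableOn g (Set.Ioc 0 t)) :
    (∫ x in (0:ℝ)..t, β x * ∫ y in (0:ℝ)..x, g y) =
      ∫ y in (0:ℝ)..t, g y * ∫ x in y..t, β x := by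
  set S := Set.Ioc (0:ℝ) t with hSdef
  have hS : MeasurableSet S := measurableSet_Ioc
  set f : ℝ → ℝ → ℝ := fun x y => if y ≤ x then β x * g y else 0 with hf
  have hfint : Integrable (Function.uncurry f)
      ((volume.restrict S).prod (volume.restrict S)) := by
    have hbase : Integrable (fun p : ℝ × ℝ => β p.1 * g p.2)
        ((volume.restrict S).prod (volume.restrict S)) := hβ.mul_prod hg
    have heq : Function.uncurry f =
        Set.indicator {p : ℝ × ℝ | p.2 ≤ p.1} (fun p => β p.1 * g p.2) := by
      funext p
      simp only [Function.uncurry, hf, Set.indicator_apply, Set.mem_setOf_eq]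
    rw [heq]
    exact hbase.indicator (measurableSet_le measurable_snd measurable_fst)
  rw [intervalIntegral.integral_of_le ht, intervalIntegral.integral_of_le ht]
  have hL : ∀ x ∈ S, β x * ∫ y in (0:ℝ)..x, g y = ∫ y in S, f x y := by
    intro x hx
    have hx0 : (0:ℝ) ≤ x := le_of_lt hx.1
    have hsub : Set.Ioc (0:ℝ) x ⊆ S := Set.Ioc_subset_Ioc_right hx.2
    have h1 : (∫ y in S, f x y) = ∫ y in S, β x * (Set.Ioc (0:ℝ) x).indicator g y := by
      refine setIntegral_congr_fun hS fun y hy => ?_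
      by_cases hxy : y ≤ x
      · simp [hf, hxy, Set.indicator_of_mem (Set.mem_Ioc.2 ⟨hy.1, hxy⟩)]
      · simp [hf, hxy, Set.indicator_of_notMem (fun hmem => hxy (Set.mem_Ioc.1 hmem).2)]
    rw [h1, MeasureTheory.integral_const_mul, setIntegral_indicator measurableSet_Ioc,
      Set.inter_eq_self_of_subset_right hsub, intervalIntegral.integral_of_le hx0]
  have hR : ∀ y ∈ S, (∫ x in S, f x y) = g y * ∫ x in y..t, β x := by
    intro y hy
    have h1 : (∫ x in S, f x y) = ∫ x in S, (Set.Ici y).indicator β x * g y := by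
      refine setIntegral_congr_fun hS fun x hx => ?_
      by_cases hxy : y ≤ x
      · simp [hf, hxy, Set.indicator_of_mem (Set.mem_Ici.2 hxy)]
      · simp [hf, hxy, Set.indicator_of_notMem (fun hmem => hxy (Set.mem_Ici.1 hmem))]
    have h2 : S ∩ Set.Ici y = Set.Icc y t := by
      ext x
      constructor
      · rintro ⟨⟨_, hxt⟩, hyx⟩; exact ⟨hyx, hxt⟩
      · rintro ⟨hyx, hxt⟩; exact ⟨⟨lt_of_lt_of_le hy.1 hyx, hxt⟩, hyx⟩
    rw [h1, MeasureTheory.integral_mul_const, setIntegral_indicator measurableSet_Ici, h2,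
      integral_Icc_eq_integral_Ioc, ← intervalIntegral.integral_of_le hy.2, mul_comm]
  calc (∫ x in S, β x * ∫ y in (0:ℝ)..x, g y) = ∫ x in S, ∫ y in S, f x y :=
        setIntegral_congr_fun hS hL
    _ = ∫ y in S, ∫ x in S, f x y := integral_integral_swap hfint
    _ = ∫ y in S, g y * ∫ x in y..t, β x := setIntegral_congr_fun hS hR

lemma abs_primInt_le {β : ℝ → ℝ} (hβ : Integrable β volume) (s : ℝ) :
    |primInt β s| ≤ ∫ τ, |β τ| := by
  rw [primInt, ← Real.norm_eq_abs]
  refine le_trans intervalIntegral.norm_integral_le_integral_norm_uIoc ?_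
  simp only [Real.norm_eq_abs]
  exact setIntegral_le_integral hβ.abs (Eventually.of_forall fun x => abs_nonneg _)

lemma continuous_primInt {β : ℝ → ℝ} (hβ : Integrable β volume) :
    Continuous (primInt β) :=
  intervalIntegral.continuous_primitive (fun _ _ => hβ.intervalIntegrable) 0

lemma integrable_mul_pow {β : ℝ → ℝ} (hβ : Integrable β volume) (k : ℕ) :
    Integrable (fun τ => β τ * primInt β τ ^ k) volume := by
  have hc : Continuous (primInt β) := continuous_primInt hβ
  have h := hβ.bdd_mul (c := (∫ τ, |β τ|) ^ k) ((hc.pow k).aestronglyMeasurable)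
    (Eventually.of_forall fun x => by
      rw [Pi.pow_apply, norm_pow]
      exact pow_le_pow_left₀ (norm_nonneg _)
        (by simpa [Real.norm_eq_abs] using abs_primInt_le hβ x) k)
  simpa [mul_comm] using h

lemma key {β : ℝ → ℝ} (hβ : Integrable β volume) :
    ∀ (k : ℕ) (t : ℝ), 0 ≤ t →
      ((k : ℝ) + 1) * ∫ τ in (0:ℝ)..t, β τ * primInt β τ ^ k
        = primInt β t ^ (k + 1) := by
  intro k
  induction k with
  | zero => intro t ht; simp [primInt]
  | succ k ih =>
    intro t ht
    set B := primInt β with hB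
    set g : ℝ → ℝ := fun y => β y * B y ^ k with hg
    have hgint : Integrable g volume := integrable_mul_pow hβ k
    have hgint' : Integrable (fun y => β y * B y ^ (k + 1)) volume :=
      integrable_mul_pow hβ (k + 1)
    have hBy : ∀ y : ℝ, (∫ x in y..t, β x) = B t - B y := fun y =>
      (integral_interval_sub_left hβ.intervalIntegrable hβ.intervalIntegrable).symm
    have h1 : (∫ τ in (0:ℝ)..t, β τ * B τ ^ (k + 1)) =
        ∫ x in (0:ℝ)..t, ((k : ℝ) + 1) * (β x * ∫ y in (0:ℝ)..x, g y) := by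
      refine intervalIntegral.integral_congr fun x hx => ?_
      rw [Set.uIcc_of_le ht] at hx
      have hx' := ih x hx.1
      rw [← hx']; ring
    have h2 : (∫ x in (0:ℝ)..t, ((k : ℝ) + 1) * (β x * ∫ y in (0:ℝ)..x, g y)) =
        ((k : ℝ) + 1) * ∫ x in (0:ℝ)..t, β x * ∫ y in (0:ℝ)..x, g y :=
      intervalIntegral.integral_const_mul _ _
    have h3 := swap_tri ht hβ.integrableOn hgint.integrableOn
    have h4 : (∫ y in (0:ℝ)..t, g y * ∫ x in y..t, β x) =
        B t * (∫ y in (0:ℝ)..t, g y) - ∫ y in (0:ℝ)..t, β y * B y ^ (k + 1) := by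
      calc (∫ y in (0:ℝ)..t, g y * ∫ x in y..t, β x)
          = ∫ y in (0:ℝ)..t, (B t * g y - β y * B y ^ (k + 1)) := by
            refine intervalIntegral.integral_congr fun y _ => ?_
            rw [hBy y]; simp only [hg]; ring
        _ = (∫ y in (0:ℝ)..t, B t * g y) - ∫ y in (0:ℝ)..t, β y * B y ^ (k + 1) :=
            intervalIntegral.integral_sub
              ((hgint.const_mul _).intervalIntegrable)
              (hgint'.intervalIntegrable)
        _ = B t * (∫ y in (0:ℝ)..t, g y) - ∫ y in (0:ℝ)..t, β y * B y ^ (k + 1) := by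
            rw [intervalIntegral.integral_const_mul]
    have heq : (∫ τ in (0:ℝ)..t, β τ * B τ ^ (k + 1)) =
        ((k : ℝ) + 1) * (B t * (∫ y in (0:ℝ)..t, g y)
          - ∫ y in (0:ℝ)..t, β y * B y ^ (k + 1)) := by
      exact h1.trans (h2.trans (congrArg (fun z => ((k : ℝ) + 1) * z) (h3.trans h4)))
    have iht : ((k : ℝ) + 1) * (∫ y in (0:ℝ)..t, g y) = B t ^ (k + 1) := ih t ht
    push_cast
    linear_combination heq + B t * iht

lemma toi_succ {A : Type*} [NormedRing A] [NormedSpace ℝ A] (f : ℝ → A) (s : ℝ) (k : ℕ)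
    (t : ℝ) :
    timeOrderedIntegral f s (k + 1) t = ∫ τ in s..t, f τ * timeOrderedIntegral f s k τ := rfl

lemma dyson_diff_bound {A : Type*} [NormedRing A] [NormedAlgebra ℂ A] [CompleteSpace A]
    (R : ℝ → A) (β : ℝ → ℝ)
    (hR : AEStronglyMeasurable R (volume : Measure ℝ))
    (hβ : Integrable β (volume : Measure ℝ))
    (hRβ : ∀ᵐ τ ∂(volume : Measure ℝ), ‖R τ‖ ≤ β τ)
    {t t' : ℝ} (ht : 0 ≤ t) (htt' : t ≤ t') :
    ‖dyson R 0 t' - dyson R 0 t‖ ≤ Real.exp (∫ τ, β τ) * ∫ τ in Set.Ioi t, β τ := by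
  set R' : ℝ → A := (Set.Ici (0:ℝ)).indicator R with hR'def
  set β' : ℝ → ℝ := (Set.Ici (0:ℝ)).indicator β with hβ'def
  set C : ℝ := ∫ τ, β τ with hCdef
  set B : ℝ → ℝ := primInt β' with hBdef
  have hβ0 : ∀ᵐ τ ∂(volume : Measure ℝ), 0 ≤ β τ :=
    hRβ.mono fun τ h => le_trans (norm_nonneg _) h
  have hβ' : Integrable β' volume := hβ.indicator measurableSet_Ici
  have hβ'0 : ∀ᵐ τ ∂(volume : Measure ℝ), 0 ≤ β' τ := by
    filter_upwards [hβ0] with τ h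
    by_cases hτ : τ ∈ Set.Ici (0:ℝ)
    · simpa [hβ'def, Set.indicator_of_mem hτ] using h
    · simp [hβ'def, Set.indicator_of_notMem hτ]
  have hR' : AEStronglyMeasurable R' volume := hR.indicator measurableSet_Ici
  have hR'β' : ∀ᵐ τ ∂(volume : Measure ℝ), ‖R' τ‖ ≤ β' τ := by
    filter_upwards [hRβ] with τ h
    by_cases hτ : τ ∈ Set.Ici (0:ℝ)
    · simpa [hR'def, hβ'def, Set.indicator_of_mem hτ] using h
    · simp [hR'def, hβ'def, Set.indicator_of_notMem hτ]
  have hβ'leβ : ∀ᵐ τ ∂(volume : Measure ℝ), β' τ ≤ β τ := by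
    filter_upwards [hβ0] with τ h
    by_cases hτ : τ ∈ Set.Ici (0:ℝ)
    · simp [hβ'def, Set.indicator_of_mem hτ]
    · simpa [hβ'def, Set.indicator_of_notMem hτ] using h
  have hC0 : 0 ≤ C := integral_nonneg_of_ae hβ0
  have hne0 : ∀ᵐ τ ∂(volume : Measure ℝ), τ ≠ 0 := by
    refine (ae_iff).2 ?_
    simpa using Real.volume_singleton
  have hβ'neg : ∀ τ : ℝ, τ < 0 → β' τ = 0 := fun τ hτ =>
    Set.indicator_of_notMem (fun hmem => absurd (Set.mem_Ici.1 hmem) (not_le.2 hτ)) β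
  have hzero_neg : ∀ g : ℝ → ℝ, (∀ τ, τ < 0 → g τ = 0) →
      ∀ s : ℝ, s < 0 → (∫ τ in (0:ℝ)..s, g τ) = 0 := by
    intro g hg s hs
    rw [intervalIntegral.integral_symm, intervalIntegral.integral_of_le hs.le,
      integral_Ioc_eq_integral_Ioo,
      setIntegral_congr_fun measurableSet_Ioo (fun τ hτ => hg τ hτ.2)]
    simp
  have hBneg : ∀ s : ℝ, s < 0 → B s = 0 := by
    intro s hs
    have := hzero_neg β' (fun τ hτ => hβ'neg τ hτ) s hs
    simpa [hBdef, primInt] using this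
  have hB0 : ∀ s, 0 ≤ B s := by
    intro s
    rcases le_or_gt 0 s with hs | hs
    · exact intervalIntegral.integral_nonneg_of_ae hs hβ'0
    · rw [hBneg s hs]
  have hBleC : ∀ s, B s ≤ C := by
    intro s
    rcases le_or_gt 0 s with hs | hs
    · have h1 : B s = ∫ τ in Set.Ioc 0 s, β' τ := intervalIntegral.integral_of_le hs
      have h2 : (∫ τ in Set.Ioc 0 s, β' τ) ≤ ∫ τ, β' τ :=
        setIntegral_le_integral hβ' hβ'0
      have h3 : (∫ τ, β' τ) ≤ ∫ τ, β τ := integral_mono_ae hβ' hβ hβ'leβ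
      rw [h1]; exact h2.trans h3
    · rw [hBneg s hs]; exact hC0
  have hBcont : Continuous B := continuous_primInt hβ'
  -- the key induction
  have deriv_bound : ∀ k : ℕ,
      (∀ᵐ τ ∂(volume : Measure ℝ),
        ‖R' τ * timeOrderedIntegral R' 0 k τ‖ ≤ (β' τ * B τ ^ k) / (Nat.factorial k : ℝ)) →
      ∀ s : ℝ, ‖timeOrderedIntegral R' 0 (k + 1) s‖
        ≤ B s ^ (k + 1) / (Nat.factorial (k + 1) : ℝ) := by
    intro k hae s
    have hbint : IntervalIntegrable
        (fun τ => (β' τ * B τ ^ k) / (Nat.factorial k : ℝ)) volume 0 s :=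
      ((integrable_mul_pow hβ' k).div_const _).intervalIntegrable
    have hb := intervalIntegral.norm_integral_le_abs_of_norm_le
      (μ := volume) (a := 0) (b := s) (ae_restrict_of_ae hae) hbint
    rw [toi_succ]
    refine hb.trans ?_
    rcases le_or_gt 0 s with hs | hs
    · have hint : (∫ τ in (0:ℝ)..s, (β' τ * B τ ^ k) / (Nat.factorial k : ℝ))
          = B s ^ (k + 1) / (((k : ℝ) + 1) * (Nat.factorial k : ℝ)) := by
        rw [intervalIntegral.integral_div]
        have hk := key hβ' k s hs
        rw [← hBdef] at hk
        have hk1 : (0:ℝ) < (k : ℝ) + 1 := by positivity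
        have hI : (∫ τ in (0:ℝ)..s, β' τ * B τ ^ k) = B s ^ (k + 1) / ((k : ℝ) + 1) := by
          field_simp
          linarith [hk]
        rw [hI, div_div]
      rw [hint, abs_of_nonneg (div_nonneg (pow_nonneg (hB0 s) _) (by positivity))]
      have : ((Nat.factorial (k + 1) : ℝ)) = ((k : ℝ) + 1) * (Nat.factorial k : ℝ) := by
        rw [Nat.factorial_succ]; push_cast; ring
      rw [this]
    · have hz : (∫ τ in (0:ℝ)..s, (β' τ * B τ ^ k) / (Nat.factorial k : ℝ)) = 0 :=
        hzero_neg _ (fun τ hτ => by rw [hβ'neg τ hτ]; simp) s hs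
      rw [hz]
      have : (0:ℝ) ≤ B s ^ (k + 1) / (Nat.factorial (k + 1) : ℝ) := by
        have := hB0 s; positivity
      simpa using this
  have P : ∀ k : ℕ,
      Continuous (timeOrderedIntegral R' 0 k) ∧
      (∀ᵐ τ ∂(volume : Measure ℝ),
        ‖R' τ * timeOrderedIntegral R' 0 k τ‖ ≤ (β' τ * B τ ^ k) / (Nat.factorial k : ℝ)) ∧
      Integrable (fun τ => R' τ * timeOrderedIntegral R' 0 k τ) volume := by
    intro k
    induction k with
    | zero =>
      have hcont : Continuous (timeOrderedIntegral R' 0 0) := by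
        have : timeOrderedIntegral R' 0 0 = fun _ : ℝ => (1 : A) := rfl
        rw [this]; exact continuous_const
      have hae : ∀ᵐ τ ∂(volume : Measure ℝ),
          ‖R' τ * timeOrderedIntegral R' 0 0 τ‖ ≤ (β' τ * B τ ^ 0) / (Nat.factorial 0 : ℝ) := by
        filter_upwards [hR'β'] with τ h
        simpa [timeOrderedIntegral] using h
      have hint : Integrable (fun τ => R' τ * timeOrderedIntegral R' 0 0 τ) volume := by
        have : Integrable R' volume := hβ'.mono' hR' hR'β'
        simpa [timeOrderedIntegral] using this
      exact ⟨hcont, hae, hint⟩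
    | succ k ihk =>
      obtain ⟨hTc, hae, hint⟩ := ihk
      have hTb := deriv_bound k hae
      have hTk1c : Continuous (timeOrderedIntegral R' 0 (k + 1)) := by
        have heq : timeOrderedIntegral R' 0 (k + 1)
            = fun t => ∫ τ in (0:ℝ)..t, R' τ * timeOrderedIntegral R' 0 k τ :=
          funext fun t => rfl
        rw [heq]
        exact intervalIntegral.continuous_primitive (fun _ _ => hint.intervalIntegrable) 0
      have haek1 : ∀ᵐ τ ∂(volume : Measure ℝ),
          ‖R' τ * timeOrderedIntegral R' 0 (k + 1) τ‖
            ≤ (β' τ * B τ ^ (k + 1)) / (Nat.factorial (k + 1) : ℝ) := by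
        filter_upwards [hR'β', hβ'0] with τ h1 h2
        calc ‖R' τ * timeOrderedIntegral R' 0 (k + 1) τ‖
            ≤ ‖R' τ‖ * ‖timeOrderedIntegral R' 0 (k + 1) τ‖ := norm_mul_le _ _
          _ ≤ β' τ * (B τ ^ (k + 1) / (Nat.factorial (k + 1) : ℝ)) :=
              mul_le_mul h1 (hTb τ) (norm_nonneg _) h2
          _ = (β' τ * B τ ^ (k + 1)) / (Nat.factorial (k + 1) : ℝ) := by ring
      have hintk1 : Integrable (fun τ => R' τ * timeOrderedIntegral R' 0 (k + 1) τ) volume := by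
        refine Integrable.mono'
          (hβ'.mul_const (C ^ (k + 1) / (Nat.factorial (k + 1) : ℝ)))
          (hR'.mul hTk1c.aestronglyMeasurable) ?_
        filter_upwards [haek1, hβ'0] with τ h1 h2
        refine h1.trans ?_
        rw [mul_div_assoc]
        exact mul_le_mul_of_nonneg_left
          ((div_le_div_iff_of_pos_right (by positivity)).2
            (pow_le_pow_left₀ (hB0 τ) (hBleC τ) _)) h2
      exact ⟨hTk1c, haek1, hintk1⟩
  -- the difference of partial iterated integrals
  have hdiffT : ∀ k : ℕ,
      timeOrderedIntegral R' 0 (k + 1) t' - timeOrderedIntegral R' 0 (k + 1) t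
        = ∫ τ in t..t', R' τ * timeOrderedIntegral R' 0 k τ := by
    intro k
    rw [toi_succ, toi_succ]
    exact integral_interval_sub_left ((P k).2.2.intervalIntegrable) ((P k).2.2.intervalIntegrable)
  have htail0 : 0 ≤ ∫ τ in Set.Ioi t, β τ :=
    setIntegral_nonneg_ae measurableSet_Ioi (by filter_upwards [hβ0] with τ h using fun _ => h)
  have hβ'tail : (∫ τ in t..t', β' τ) ≤ ∫ τ in Set.Ioi t, β τ := by
    rw [intervalIntegral.integral_of_le htt']
    calc (∫ τ in Set.Ioc t t', β' τ) ≤ ∫ τ in Set.Ioc t t', β τ :=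
          integral_mono_ae hβ'.integrableOn hβ.integrableOn (ae_restrict_of_ae hβ'leβ)
      _ ≤ ∫ τ in Set.Ioi t, β τ :=
          setIntegral_mono_set hβ.integrableOn (ae_restrict_of_ae hβ0)
            (HasSubset.Subset.eventuallyLE Set.Ioc_subset_Ioi_self)
  have hdiffbound : ∀ k : ℕ,
      ‖timeOrderedIntegral R' 0 (k + 1) t' - timeOrderedIntegral R' 0 (k + 1) t‖
        ≤ (∫ τ in Set.Ioi t, β τ) * (C ^ k / (Nat.factorial k : ℝ)) := by
    intro k
    rw [hdiffT k]
    have hmaj : ∀ᵐ τ ∂(volume : Measure ℝ),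
        ‖R' τ * timeOrderedIntegral R' 0 k τ‖ ≤ β' τ * (C ^ k / (Nat.factorial k : ℝ)) := by
      filter_upwards [(P k).2.1, hβ'0] with τ h1 h2
      refine h1.trans ?_
      rw [mul_div_assoc]
      exact mul_le_mul_of_nonneg_left
        ((div_le_div_iff_of_pos_right (by positivity)).2
          (pow_le_pow_left₀ (hB0 τ) (hBleC τ) _)) h2
    have hb := intervalIntegral.norm_integral_le_abs_of_norm_le
      (μ := volume) (a := t) (b := t') (ae_restrict_of_ae hmaj)
      ((hβ'.mul_const _).intervalIntegrable)
    refine hb.trans ?_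
    rw [intervalIntegral.integral_mul_const]
    have hnn : 0 ≤ (∫ τ in t..t', β' τ) := intervalIntegral.integral_nonneg_of_ae htt' hβ'0
    rw [abs_of_nonneg (mul_nonneg hnn (by positivity))]
    exact mul_le_mul_of_nonneg_right hβ'tail (by positivity)
  -- summability
  have hsummaj : Summable (fun k : ℕ => C ^ (k + 1) / (Nat.factorial (k + 1) : ℝ)) :=
    (Real.summable_pow_div_factorial C).comp_injective Nat.succ_injective
  have hTnorm : ∀ (k : ℕ) (s : ℝ),
      ‖timeOrderedIntegral R' 0 (k + 1) s‖ ≤ C ^ (k + 1) / (Nat.factorial (k + 1) : ℝ) := by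
    intro k s
    refine (deriv_bound k (P k).2.1 s).trans ?_
    gcongr
    · exact hB0 s
    · exact hBleC s
  have hsum1 : ∀ s : ℝ,
      Summable (fun k : ℕ => (Complex.I ^ (k + 1)) • timeOrderedIntegral R' 0 (k + 1) s) := by
    intro s
    refine Summable.of_norm_bounded hsummaj ?_
    intro k
    rw [norm_smul, norm_pow, Complex.norm_I, one_pow, one_mul]
    exact hTnorm k s
  -- rewriting dyson in terms of R'
  have hTT : ∀ (k : ℕ) (s : ℝ), 0 ≤ s →
      timeOrderedIntegral R 0 k s = timeOrderedIntegral R' 0 k s := by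
    intro k
    induction k with
    | zero => intro s _; rfl
    | succ k ih =>
      intro s hs
      rw [toi_succ, toi_succ]
      refine intervalIntegral.integral_congr fun τ hτ => ?_
      rw [Set.uIcc_of_le hs] at hτ
      rw [ih τ hτ.1, hR'def, Set.indicator_of_mem (Set.mem_Ici.2 hτ.1)]
  have hdysoneq : ∀ s : ℝ, 0 ≤ s →
      dyson R 0 s = 1 + ∑' k : ℕ, (Complex.I ^ (k + 1)) • timeOrderedIntegral R' 0 (k + 1) s := by
    intro s hs
    rw [dyson]
    congr 1
    exact tsum_congr fun k => by rw [hTT (k + 1) s hs]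
  have hdiff : dyson R 0 t' - dyson R 0 t
      = ∑' k : ℕ, (Complex.I ^ (k + 1)) •
          (timeOrderedIntegral R' 0 (k + 1) t' - timeOrderedIntegral R' 0 (k + 1) t) := by
    rw [hdysoneq t' (ht.trans htt'), hdysoneq t ht, add_sub_add_left_eq_sub,
      ← Summable.tsum_sub (hsum1 t') (hsum1 t)]
    exact tsum_congr fun k => (smul_sub _ _ _).symm
  rw [hdiff]
  have hnormsum : Summable (fun k : ℕ =>
      ‖(Complex.I ^ (k + 1)) •
        (timeOrderedIntegral R' 0 (k + 1) t' - timeOrderedIntegral R' 0 (k + 1) t)‖) := by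
    refine Summable.of_nonneg_of_le (fun k => norm_nonneg _) (fun k => ?_)
      ((Real.summable_pow_div_factorial C).mul_left (∫ τ in Set.Ioi t, β τ))
    rw [norm_smul, norm_pow, Complex.norm_I, one_pow, one_mul]
    exact hdiffbound k
  calc ‖∑' k : ℕ, (Complex.I ^ (k + 1)) •
        (timeOrderedIntegral R' 0 (k + 1) t' - timeOrderedIntegral R' 0 (k + 1) t)‖
      ≤ ∑' k : ℕ, ‖(Complex.I ^ (k + 1)) •
        (timeOrderedIntegral R' 0 (k + 1) t' - timeOrderedIntegral R' 0 (k + 1) t)‖ :=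
        norm_tsum_le_tsum_norm hnormsum
    _ ≤ ∑' k : ℕ, (∫ τ in Set.Ioi t, β τ) * (C ^ k / (Nat.factorial k : ℝ)) := by
        refine Summable.tsum_le_tsum (fun k => ?_) hnormsum
          ((Real.summable_pow_div_factorial C).mul_left _)
        rw [norm_smul, norm_pow, Complex.norm_I, one_pow, one_mul]
        exact hdiffbound k
    _ = (∫ τ in Set.Ioi t, β τ) * ∑' k : ℕ, C ^ k / (Nat.factorial k : ℝ) := tsum_mul_left
    _ = (∫ τ in Set.Ioi t, β τ) * Real.exp C := by
        congr 1
        rw [Real.exp_eq_exp_ℝ, NormedSpace.exp_eq_tsum_div]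
    _ = Real.exp C * ∫ τ in Set.Ioi t, β τ := mul_comm _ _

end DysonAux

theorem dyson_rate_of_convergence
    {A : Type*} [NormedRing A] [NormedAlgebra ℂ A] [CompleteSpace A]
    (R : ℝ → A) (β : ℝ → ℝ)
    (hR : AEStronglyMeasurable R (volume : Measure ℝ))
    (hβ : Integrable β (volume : Measure ℝ))
    (hRβ : ∀ᵐ τ ∂(volume : Measure ℝ), ‖R τ‖ ≤ β τ)
    (Qp : A) (hQp : Tendsto (fun t : ℝ => dyson R 0 t) atTop (𝓝 Qp)) :
    ∀ t : ℝ, 0 ≤ t →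
      ‖Qp - dyson R 0 t‖ ≤ Real.exp (∫ τ, β τ) * ∫ τ in Set.Ioi t, β τ := by
  intro t ht
  have h1 : Tendsto (fun t' : ℝ => dyson R 0 t' - dyson R 0 t) atTop
      (𝓝 (Qp - dyson R 0 t)) := hQp.sub_const _
  have h2 : Tendsto (fun t' : ℝ => ‖dyson R 0 t' - dyson R 0 t‖) atTop
      (𝓝 ‖Qp - dyson R 0 t‖) := h1.norm
  refine le_of_tendsto h2 ?_
  filter_upwards [eventually_ge_atTop t] with t' htt'
  exact DysonAux.dyson_diff_bound R β hR hβ hRβ ht htt'
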